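/- Let f(n,d) = H_clm(n,d) + 1, where H_clm(n,d) is the maximum length of connected layer multicomplexes of rank d on n elements. Then f(n,d) ≤ 2·f(⌊n/2⌋, d) + f(n, d−1) for all n, d ≥ 2. -/

import Mathlib

/-- `IsCLM n d a b L` : the layers `L a, …, L b` form a connected layer multicomplex
of rank `d` on `n` elements. The facets (size-`d` multisets of `[n]`) are partitioned
into the nonempty layers `L a, …, L b`, and for every multiset `S` the set of layers
whose star contains `S` is an interval. -/
def IsCLM (n d : ℕ) (a b : ℤ) (L : ℤ → Set (Multiset (Fin n))) : Prop :=
  a ≤ b ∧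
  (∀ i X, X ∈ L i → Multiset.card X = d) ∧
  (∀ i, (L i).Nonempty ↔ a ≤ i ∧ i ≤ b) ∧
  (∀ i j X, X ∈ L i → X ∈ L j → i = j) ∧
  (∀ (S : Multiset (Fin n)) (i j k : ℤ), i ≤ j → j ≤ k →
    (∃ X ∈ L i, S ≤ X) → (∃ X ∈ L k, S ≤ X) → ∃ X ∈ L j, S ≤ X)

/-- `Hclm n d` : the maximum length of connected layer multicomplexes of rank `d`
on `n` elements. -/
noncomputable def Hclm (n d : ℕ) : ℕ :=
  sSup {l | ∃ (a b : ℤ) (L : ℤ → Set (Multiset (Fin n))),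
    IsCLM n d a b L ∧ (b - a).toNat = l}

lemma isCLM_length_le_card {n d : ℕ} {a b : ℤ} {L : ℤ → Set (Multiset (Fin n))}
    (h : IsCLM n d a b L) : (b - a).toNat ≤ Fintype.card (Sym (Fin n) d) := by
  classical
  obtain ⟨hab, hcard, hne, hdisj, hconn⟩ := h
  set f : ℤ → Multiset (Fin n) := fun i => if h : (L i).Nonempty then h.choose else 0 with hf
  have hfmem : ∀ i ∈ Finset.Icc a b, f i ∈ L i := by
    intro i hi
    rw [Finset.mem_Icc] at hi
    have hne' : (L i).Nonempty := (hne i).2 hi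
    simp only [hf, dif_pos hne']
    exact hne'.choose_spec
  have key : (Finset.Icc a b).card ≤
      (Finset.image (fun s : Sym (Fin n) d => (s : Multiset (Fin n))) Finset.univ).card := by
    apply Finset.card_le_card_of_injOn f
    · intro i hi
      simp only [Finset.mem_coe, Finset.mem_image, Finset.mem_univ, true_and]
      exact ⟨⟨f i, hcard i _ (hfmem i hi)⟩, rfl⟩
    · intro i hi j hj hij
      exact hdisj i j (f i) (hfmem i hi) (hij ▸ hfmem j hj)
  have h2 : (Finset.image (fun s : Sym (Fin n) d => (s : Multiset (Fin n))) Finset.univ).card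
      ≤ Fintype.card (Sym (Fin n) d) := by
    simpa using Finset.card_image_le (s := (Finset.univ : Finset (Sym (Fin n) d)))
  have h3 : (b - a).toNat ≤ (Finset.Icc a b).card := by
    rw [Int.card_Icc]; omega
  omega

lemma bddAbove_clm (n d : ℕ) :
    BddAbove {l | ∃ a b L, IsCLM n d a b L ∧ (b - a).toNat = l} := by
  refine ⟨Fintype.card (Sym (Fin n) d), ?_⟩
  rintro l ⟨a, b, L, h, rfl⟩
  exact isCLM_length_le_card h

lemma le_Hclm {n d : ℕ} {a b : ℤ} {L : ℤ → Set (Multiset (Fin n))}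
    (h : IsCLM n d a b L) : (b - a).toNat ≤ Hclm n d :=
  le_csSup (bddAbove_clm n d) ⟨a, b, L, h, rfl⟩

lemma IsCLM.restrict {n d : ℕ} {a b : ℤ} {L : ℤ → Set (Multiset (Fin n))}
    (h : IsCLM n d a b L) {a' b' : ℤ} (ha : a ≤ a') (hb : b' ≤ b) (hab : a' ≤ b') :
    IsCLM n d a' b' (fun i => if a' ≤ i ∧ i ≤ b' then L i else ∅) := by
  obtain ⟨_, hcard, hne, hdisj, hconn⟩ := h
  refine ⟨hab, ?_, ?_, ?_, ?_⟩
  · intro i X hX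
    by_cases hi : a' ≤ i ∧ i ≤ b' <;> simp [hi] at hX
    exact hcard i X hX
  · intro i
    by_cases hi : a' ≤ i ∧ i ≤ b'
    · simp only [if_pos hi]
      constructor
      · intro _; exact hi
      · intro _; exact (hne i).2 ⟨le_trans ha hi.1, le_trans hi.2 hb⟩
    · simp only [if_neg hi]
      simp only [Set.not_nonempty_empty, false_iff]
      exact fun hc => hi ⟨hc.1, hc.2⟩
  · intro i j X hXi hXj
    by_cases hi : a' ≤ i ∧ i ≤ b' <;> simp [hi] at hXi
    by_cases hj : a' ≤ j ∧ j ≤ b' <;> simp [hj] at hXj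
    exact hdisj i j X hXi hXj
  · intro S i j k hij hjk hi hk
    by_cases hi' : a' ≤ i ∧ i ≤ b'
    · by_cases hk' : a' ≤ k ∧ k ≤ b'
      · have hj' : a' ≤ j ∧ j ≤ b' := ⟨le_trans hi'.1 hij, le_trans hjk hk'.2⟩
        simp only [if_pos hi'] at hi
        simp only [if_pos hk'] at hk
        simp only [if_pos hj']
        exact hconn S i j k hij hjk hi hk
      · simp [hk'] at hk
    · simp [hi'] at hi

lemma IsCLM.relabel {n m d : ℕ} {a b : ℤ} {L : ℤ → Set (Multiset (Fin n))}
    (h : IsCLM n d a b L) (g : Fin n → Fin m)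
    (hg : ∃ h' : Fin m → Fin n, ∀ i X, X ∈ L i → ∀ x ∈ X, h' (g x) = x) :
    IsCLM m d a b (fun i => (Multiset.map g) '' L i) := by
  obtain ⟨h', hh'⟩ := hg
  obtain ⟨hab, hcard, hne, hdisj, hconn⟩ := h
  have hback : ∀ i X, X ∈ L i → Multiset.map h' (Multiset.map g X) = X := by
    intro i X hX
    rw [Multiset.map_map]
    rw [show X = Multiset.map id X by simp]
    rw [Multiset.map_map]
    exact Multiset.map_congr rfl (fun x hx => by simpa using hh' i X hX x (by simpa using hx))
  refine ⟨hab, ?_, ?_, ?_, ?_⟩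
  · rintro i X ⟨Y, hY, rfl⟩
    rw [Multiset.card_map]; exact hcard i Y hY
  · intro i
    rw [Set.image_nonempty]; exact hne i
  · rintro i j X ⟨Y, hY, rfl⟩ ⟨Z, hZ, hZY⟩
    have : Z = Y := by
      have := hback i Y hY
      have h2 := hback j Z hZ
      rw [hZY] at h2
      rw [← h2, this]
    exact hdisj i j Y hY (this ▸ hZ)
  · rintro S i j k hij hjk ⟨X, ⟨Y, hY, rfl⟩, hSX⟩ ⟨X', ⟨Z, hZ, rfl⟩, hSZ⟩
    -- pull back S
    have hT : Multiset.map h' S ≤ Y := by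
      have := Multiset.map_le_map (f := h') hSX
      rwa [hback i Y hY] at this
    have hT' : Multiset.map h' S ≤ Z := by
      have := Multiset.map_le_map (f := h') hSZ
      rwa [hback k Z hZ] at this
    obtain ⟨W, hW, hTW⟩ := hconn (Multiset.map h' S) i j k hij hjk ⟨Y, hY, hT⟩ ⟨Z, hZ, hT'⟩
    refine ⟨Multiset.map g W, ⟨W, hW, rfl⟩, ?_⟩
    have hS : Multiset.map g (Multiset.map h' S) = S := by
      rw [Multiset.map_map]
      rw [show S = Multiset.map id S from (Multiset.map_id S).symm]
      rw [Multiset.map_map]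
      apply Multiset.map_congr rfl
      intro s hs
      simp only [Function.comp, id]
      have hs' : s ∈ Multiset.map g Y := Multiset.mem_of_le hSX (by simpa using hs)
      obtain ⟨y, hy, rfl⟩ := Multiset.mem_map.1 hs'
      rw [hh' i Y hY y hy]
    calc S = Multiset.map g (Multiset.map h' S) := hS.symm
    _ ≤ Multiset.map g W := Multiset.map_le_map hTW

lemma IsCLM.link {n d : ℕ} {a b : ℤ} {L : ℤ → Set (Multiset (Fin n))}
    (h : IsCLM n d a b L) (hd : 1 ≤ d) (x : Fin n) {i0 i1 : ℤ}
    (h0 : ∃ X ∈ L i0, x ∈ X) (h1 : ∃ X ∈ L i1, x ∈ X)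
    (hmin : ∀ i, (∃ X ∈ L i, x ∈ X) → i0 ≤ i) (hmax : ∀ i, (∃ X ∈ L i, x ∈ X) → i ≤ i1) :
    IsCLM n (d - 1) i0 i1 (fun i => {Y | x ::ₘ Y ∈ L i}) := by
  obtain ⟨hab, hcard, hne, hdisj, hconn⟩ := h
  have h01 : i0 ≤ i1 := hmax i0 h0
  refine ⟨h01, ?_, ?_, ?_, ?_⟩
  · intro i Y hY
    have := hcard i _ hY
    rw [Multiset.card_cons] at this
    omega
  · intro i
    constructor
    · rintro ⟨Y, hY⟩
      have hx : ∃ X ∈ L i, x ∈ X := ⟨x ::ₘ Y, hY, Multiset.mem_cons_self x Y⟩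
      exact ⟨hmin i hx, hmax i hx⟩
    · rintro ⟨hi0, hi1⟩
      obtain ⟨X0, hX0, hx0⟩ := h0
      obtain ⟨X1, hX1, hx1⟩ := h1
      obtain ⟨X, hX, hSX⟩ := hconn {x} i0 i i1 hi0 hi1
        ⟨X0, hX0, Multiset.singleton_le.2 hx0⟩ ⟨X1, hX1, Multiset.singleton_le.2 hx1⟩
      have hxX : x ∈ X := Multiset.singleton_le.1 hSX
      exact ⟨X.erase x, by simpa [Multiset.cons_erase hxX] using hX⟩
  · intro i j Y hYi hYj
    exact hdisj i j (x ::ₘ Y) hYi hYj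
  · rintro S i j k hij hjk ⟨Y, hY, hSY⟩ ⟨Z, hZ, hSZ⟩
    obtain ⟨X, hX, hSX⟩ := hconn (x ::ₘ S) i j k hij hjk
      ⟨x ::ₘ Y, hY, Multiset.cons_le_cons x hSY⟩ ⟨x ::ₘ Z, hZ, Multiset.cons_le_cons x hSZ⟩
    have hxX : x ∈ X := Multiset.mem_of_le hSX (Multiset.mem_cons_self x S)
    refine ⟨X.erase x, by simpa [Multiset.cons_erase hxX] using hX, ?_⟩
    rw [← Multiset.cons_le_cons_iff x]
    rwa [Multiset.cons_erase hxX]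

/-- With `f(n,d) = H_clm(n,d) + 1`, the recursion
`f(n,d) ≤ 2·f(⌊n/2⌋, d) + f(n, d−1)` holds for all `n, d ≥ 2`. -/
theorem Hclm_recursion (n d : ℕ) (hn : 2 ≤ n) (hd : 2 ≤ d) :
    Hclm n d + 1 ≤ 2 * (Hclm (n / 2) d + 1) + (Hclm n (d - 1) + 1) := by
  classical
  set m := n / 2 with hm
  set H1 := Hclm m d with hH1
  set H2 := Hclm n (d - 1) with hH2
  have main : Hclm n d ≤ 2 * H1 + H2 + 2 := by
    apply csSup_le'
    rintro l ⟨a, b, L, hclm, rfl⟩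
    obtain ⟨hab, hcard, hne, hdisj, hconn⟩ := id hclm
    set used : ℤ → ℤ → Finset (Fin n) :=
      fun s t => Finset.univ.filter (fun x => ∃ i, s ≤ i ∧ i ≤ t ∧ ∃ X ∈ L i, x ∈ X)
      with hused
    have hmem_used : ∀ s t (x : Fin n),
        x ∈ used s t ↔ ∃ i, s ≤ i ∧ i ≤ t ∧ ∃ X ∈ L i, x ∈ X := by
      intro s t x; simp [hused]
    have hempty : ∀ s t : ℤ, t < s → used s t = ∅ := by
      intro s t hst
      rw [Finset.eq_empty_iff_forall_notMem]
      intro x hx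
      obtain ⟨i, h1, h2, -⟩ := (hmem_used s t x).1 hx
      omega
    obtain ⟨p, ⟨hpa, hpb, hpcard⟩, hpmax⟩ :=
      Int.exists_greatest_of_bdd (P := fun z => a - 1 ≤ z ∧ z ≤ b ∧ (used a z).card ≤ m)
        ⟨b, fun z hz => hz.2.1⟩
        ⟨a - 1, by omega, by omega, by rw [hempty a (a - 1) (by omega)]; simp⟩
    obtain ⟨q, ⟨hqa, hqb, hqcard⟩, hqmin⟩ :=
      Int.exists_least_of_bdd (P := fun z => a ≤ z ∧ z ≤ b + 1 ∧ (used z b).card ≤ m)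
        ⟨a, fun z hz => hz.1⟩
        ⟨b + 1, by omega, by omega, by rw [hempty (b + 1) b (by omega)]; simp⟩
    -- bound for pieces using at most m symbols
    have relabel_bound : ∀ s t : ℤ, a ≤ s → s ≤ t → t ≤ b → (used s t).card ≤ m →
        t - s ≤ (H1 : ℤ) := by
      intro s t hs hst htb hcardle
      set A := used s t with hA
      have hAne : A.Nonempty := by
        obtain ⟨X, hX⟩ := (hne s).2 ⟨hs, le_trans hst htb⟩
        have hcX : Multiset.card X = d := hcard s X hX
        have hX0 : X ≠ 0 := by intro h0; rw [h0] at hcX; simp at hcX; omega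
        obtain ⟨x, hx⟩ := Multiset.exists_mem_of_ne_zero hX0
        exact ⟨x, (hmem_used s t x).2 ⟨s, le_refl _, hst, X, hX, hx⟩⟩
      have hcardA : Fintype.card {x // x ∈ A} ≤ Fintype.card (Fin m) := by
        simpa using hcardle
      obtain ⟨f⟩ := Function.Embedding.nonempty_of_card_le hcardA
      haveI : Nonempty {x // x ∈ A} := ⟨⟨hAne.choose, hAne.choose_spec⟩⟩
      set g : Fin n → Fin m :=
        fun x => if hx : x ∈ A then f ⟨x, hx⟩ else f (Classical.arbitrary _) with hg
      set h' : Fin m → Fin n := fun y => ((Function.invFun f y : {x // x ∈ A}) : Fin n) with hh'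
      have hrestr := hclm.restrict (a' := s) (b' := t) hs htb hst
      have hginv : ∀ i X, X ∈ (fun i => if s ≤ i ∧ i ≤ t then L i else ∅) i →
          ∀ x ∈ X, h' (g x) = x := by
        intro i X hX x hx
        by_cases hi : s ≤ i ∧ i ≤ t
        · simp only [if_pos hi] at hX
          have hxA : x ∈ A := (hmem_used s t x).2 ⟨i, hi.1, hi.2, X, hX, hx⟩
          have : Function.invFun f (f ⟨x, hxA⟩) = ⟨x, hxA⟩ :=
            Function.leftInverse_invFun f.injective ⟨x, hxA⟩
          simp only [hg, hh', dif_pos hxA, this]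
        · simp only [if_neg hi] at hX
          exact absurd hX (Set.notMem_empty X)
      have hrel := hrestr.relabel g ⟨h', hginv⟩
      have := le_Hclm hrel
      omega
    have B1 : p - a + 1 ≤ (H1 : ℤ) + 1 := by
      rcases lt_or_ge p a with h | h
      · omega
      · have := relabel_bound a p (le_refl a) h hpb hpcard; omega
    have B3 : b - q + 1 ≤ (H1 : ℤ) + 1 := by
      rcases lt_or_ge b q with h | h
      · omega
      · have := relabel_bound q b hqa h (le_refl b) hqcard; omega
    rcases eq_or_lt_of_le hpb with hpb' | hpb'
    · omega
    rcases eq_or_lt_of_le hqa with hqa' | hqa'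
    · omega
    have hU1 : m < (used a (p + 1)).card := by
      by_contra hc; push_neg at hc
      have := hpmax (p + 1) ⟨by omega, by omega, hc⟩; omega
    have hU2 : m < (used (q - 1) b).card := by
      by_contra hc; push_neg at hc
      have := hqmin (q - 1) ⟨by omega, by omega, hc⟩; omega
    have hint : (used a (p + 1) ∩ used (q - 1) b).Nonempty := by
      rw [← Finset.card_pos]
      have hu := Finset.card_union_add_card_inter (used a (p + 1)) (used (q - 1) b)
      have hle : (used a (p + 1) ∪ used (q - 1) b).card ≤ n := by
        have := Finset.card_le_univ (used a (p + 1) ∪ used (q - 1) b)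
        simpa using this
      omega
    obtain ⟨x, hx⟩ := hint
    rw [Finset.mem_inter] at hx
    obtain ⟨i', hi'1, hi'2, hXi'⟩ := (hmem_used a (p + 1) x).1 hx.1
    obtain ⟨i'', hi''1, hi''2, hXi''⟩ := (hmem_used (q - 1) b x).1 hx.2
    have hJsub : ∀ i : ℤ, (∃ X ∈ L i, x ∈ X) → a ≤ i ∧ i ≤ b := by
      rintro i ⟨X, hX, -⟩; exact (hne i).1 ⟨X, hX⟩
    obtain ⟨i0, hi0J, hi0min⟩ := Int.exists_least_of_bdd
      (P := fun i => ∃ X ∈ L i, x ∈ X) ⟨a, fun z hz => (hJsub z hz).1⟩ ⟨i', hXi'⟩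
    obtain ⟨i1, hi1J, hi1max⟩ := Int.exists_greatest_of_bdd
      (P := fun i => ∃ X ∈ L i, x ∈ X) ⟨b, fun z hz => (hJsub z hz).2⟩ ⟨i', hXi'⟩
    have hlink := hclm.link (by omega) x hi0J hi1J hi0min hi1max
    have hmid := le_Hclm hlink
    have h0le : i0 ≤ i' := hi0min i' hXi'
    have h1ge : i'' ≤ i1 := hi1max i'' hXi''
    omega
  omega
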